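/- If M is an open k-monopoly in a graph G with k ≥ 1, then the number of edges of the subgraph induced by M is at least k·n, where n is the order of G. -/
import Mathlib


open Finset

/-- Number of neighbors of `v` inside `S`. -/
def degIn {V : Type*} [Fintype V] [DecidableEq V] (G : SimpleGraph V) [DecidableRel G.Adj]
    (S : Finset V) (v : V) : ℕ := (G.neighborFinset v ∩ S).card

/-- `M` is an open `k`-monopoly: `δ_M(v) ≥ δ(v)/2 + k` for every vertex `v`. -/
def IsKMonopoly {V : Type*} [Fintype V] [DecidableEq V] (G : SimpleGraph V) [DecidableRel G.Adj]
    (k : ℤ) (M : Finset V) : Prop :=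
  M.Nonempty ∧ ∀ v : V, ((degIn G M v : ℚ)) ≥ (G.degree v : ℚ) / 2 + (k : ℚ)

/-- The open `k`-monopoly number: minimum cardinality of an open `k`-monopoly. -/
noncomputable def monopolyNumber {V : Type*} [Fintype V] [DecidableEq V] (G : SimpleGraph V)
    [DecidableRel G.Adj] (k : ℤ) : ℕ :=
  sInf {n : ℕ | ∃ M : Finset V, IsKMonopoly G k M ∧ M.card = n}


lemma degIn_eq_filter {V : Type*} [Fintype V] [DecidableEq V] (G : SimpleGraph V)
    [DecidableRel G.Adj] (S : Finset V) (v : V) :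
    degIn G S v = (S.filter (G.Adj v)).card := by
  unfold degIn
  congr 1
  ext u
  simp [SimpleGraph.mem_neighborFinset, and_comm]

lemma sum_degIn {V : Type*} [Fintype V] [DecidableEq V] (G : SimpleGraph V) [DecidableRel G.Adj]
    (M : Finset V) :
    ∑ v ∈ M, degIn G M v = 2 * (G.induce (M : Set V)).edgeFinset.card := by
  classical
  rw [← SimpleGraph.sum_degrees_eq_twice_card_edges]
  rw [← Finset.sum_coe_sort M (fun v => degIn G M v)]
  apply Finset.sum_congr rfl
  intro v _
  rw [degIn_eq_filter, SimpleGraph.degree, SimpleGraph.neighborFinset_eq_filter]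
  symm
  refine Finset.card_bij (fun (u : ↥((M : Set V))) (_ : u ∈ Finset.univ.filter
      fun w => (G.induce (M : Set V)).Adj v w) => (u : V)) ?_ ?_ ?_
  · intro u hu
    simp only [Finset.mem_filter, Finset.mem_univ, true_and] at hu
    simp only [Finset.mem_filter]
    exact ⟨u.2, hu⟩
  · intro a _ b _ h
    exact Subtype.ext h
  · intro u hu
    simp only [Finset.mem_filter] at hu
    exact ⟨⟨u, hu.1⟩, by simpa using hu.2, rfl⟩

lemma swap_sum {V : Type*} [Fintype V] [DecidableEq V] (G : SimpleGraph V) [DecidableRel G.Adj]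
    (A B : Finset V) : ∑ v ∈ A, degIn G B v = ∑ v ∈ B, degIn G A v := by
  simp only [degIn_eq_filter, Finset.card_filter]
  rw [Finset.sum_comm]
  refine Finset.sum_congr rfl fun u _ => Finset.sum_congr rfl fun v _ => ?_
  simp [G.adj_comm u v]

theorem stmt8 {V : Type*} [Fintype V] [DecidableEq V] (G : SimpleGraph V) [DecidableRel G.Adj]
    (k : ℤ) (hk : 1 ≤ k) (M : Finset V) (hM : M.Nonempty)
    (hmon : ∀ v : V, (degIn G M v : ℤ) ≥ (degIn G Mᶜ v : ℤ) + 2 * k) :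
    k * (Fintype.card V : ℤ) ≤ ((G.induce (M : Set V)).edgeFinset.card : ℤ) := by
  classical
  have h1 : (∑ v ∈ M, (degIn G M v : ℤ)) = 2 * ((G.induce (M : Set V)).edgeFinset.card : ℤ) := by
    exact_mod_cast sum_degIn G M
  have h2 : ∑ v ∈ M, (degIn G Mᶜ v : ℤ) = ∑ v ∈ Mᶜ, (degIn G M v : ℤ) := by
    exact_mod_cast swap_sum G M Mᶜ
  have hA : ∑ v ∈ M, ((degIn G Mᶜ v : ℤ) + 2 * k) ≤ ∑ v ∈ M, (degIn G M v : ℤ) :=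
    Finset.sum_le_sum fun v _ => hmon v
  have hB : ∑ v ∈ Mᶜ, (2 * k : ℤ) ≤ ∑ v ∈ Mᶜ, (degIn G M v : ℤ) :=
    Finset.sum_le_sum fun v _ => by
      have := hmon v
      have h0 : (0 : ℤ) ≤ (degIn G Mᶜ v : ℤ) := Int.natCast_nonneg _
      linarith
  rw [Finset.sum_add_distrib, Finset.sum_const, h2] at hA
  rw [Finset.sum_const] at hB
  have hcard : (M.card : ℤ) + (Mᶜ.card : ℤ) = (Fintype.card V : ℤ) := by
    exact_mod_cast Finset.card_add_card_compl M
  simp only [nsmul_eq_mul] at hA hB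
  nlinarith [hA, hB, hcard, h1]
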